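/- Let g ∈ k[t] be a monic polynomial of degree d ≥ 1. Then there exists a formal Laurent series s ∈ k((t^{-1})) of the form s = t + (terms of degree ≤ 0) such that s^d / s' = g, i.e., g∂ = s^d ∂_s where ∂_s = (1/s')∂. -/

import Mathlib

open Polynomial

/-- The formal derivative `d/du` on `k((u))` (we think of `u = t⁻¹`). -/
noncomputable def laurentDeriv {k : Type*} [Field k] (F : LaurentSeries k) :
    LaurentSeries k where
  coeff n := ((n + 1 : ℤ) : k) * F.coeff (n + 1)
  isPWO_support' := by
    have hsub : (Function.support fun n : ℤ => ((n + 1 : ℤ) : k) * F.coeff (n + 1)) ⊆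
        (fun n : ℤ => n - 1) '' F.support := by
      intro n hn
      have : F.coeff (n + 1) ≠ 0 := by
        intro h
        simp [Function.mem_support, h] at hn
      exact ⟨n + 1, this, by ring⟩
    exact (F.isPWO_support.image_of_monotone (fun a b hab => by omega)).mono hsub

/-- `t = u⁻¹` as a Laurent series in `u = t⁻¹`. -/
noncomputable def tVar (k : Type*) [Field k] : LaurentSeries k :=
  HahnSeries.single (-1 : ℤ) 1

/-- The derivative `d/dt = -u² · d/du` on `k((t⁻¹))`. -/
noncomputable def tDeriv {k : Type*} [Field k] (F : LaurentSeries k) : LaurentSeries k :=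
  -(HahnSeries.single (2 : ℤ) (1 : k)) * laurentDeriv F

namespace Stmt6Aux

variable {k : Type*} [Field k] [CharZero k]

lemma ps_coeff_mul_congr {F₁ F₂ G₁ G₂ : PowerSeries k} {n : ℕ}
    (h₁ : ∀ i ≤ n, PowerSeries.coeff i F₁ = PowerSeries.coeff i G₁)
    (h₂ : ∀ i ≤ n, PowerSeries.coeff i F₂ = PowerSeries.coeff i G₂) :
    PowerSeries.coeff n (F₁ * F₂) = PowerSeries.coeff n (G₁ * G₂) := by
  rw [PowerSeries.coeff_mul, PowerSeries.coeff_mul]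
  refine Finset.sum_congr rfl fun p hp => ?_
  rw [Finset.HasAntidiagonal.mem_antidiagonal] at hp
  rw [h₁ p.1 (by omega), h₂ p.2 (by omega)]

lemma ps_coeff_pow_congr {F G : PowerSeries k} {n : ℕ}
    (h : ∀ i ≤ n, PowerSeries.coeff i F = PowerSeries.coeff i G) (d : ℕ) :
    ∀ i ≤ n, PowerSeries.coeff i (F ^ d) = PowerSeries.coeff i (G ^ d) := by
  induction d with
  | zero => intro i hi; simp
  | succ d ih =>
    intro i hi
    rw [pow_succ, pow_succ]
    exact ps_coeff_mul_congr (fun j hj => ih j (hj.trans hi)) (fun j hj => h j (hj.trans hi))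

lemma ofPowerSeries_coeff_neg (f : PowerSeries k) {m : ℤ} (hm : m < 0) :
    (HahnSeries.ofPowerSeries ℤ k f).coeff m = 0 := by
  rw [HahnSeries.ofPowerSeries_apply]
  apply HahnSeries.embDomain_notin_range
  rintro ⟨j, hj⟩
  have hj' : (j : ℤ) = m := hj
  omega

lemma laurentDeriv_coeff (F : LaurentSeries k) (m : ℤ) :
    (laurentDeriv F).coeff m = ((m + 1 : ℤ) : k) * F.coeff (m + 1) := rfl

lemma tDeriv_coeff (F : LaurentSeries k) (n : ℤ) :
    (tDeriv F).coeff n = -(((n - 1 : ℤ) : k) * F.coeff (n - 1)) := by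
  have hneg : -(HahnSeries.single (2 : ℤ) (1 : k)) = HahnSeries.single (2 : ℤ) (-1 : k) := by
    ext m
    rw [HahnSeries.coeff_neg, HahnSeries.coeff_single, HahnSeries.coeff_single]
    split <;> simp
  rw [tDeriv, hneg]
  have h : n = (n - 2) + 2 := by ring
  conv_lhs => rw [h, HahnSeries.coeff_single_mul_add, laurentDeriv_coeff]
  have h2 : n - 2 + 1 = n - 1 := by ring
  rw [h2]
  ring

/-- The defect polynomial: we want it to have vanishing low coefficients. -/
noncomputable def Phi (P : k[X]) (d : ℕ) (A : k[X]) : k[X] :=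
  P * (A - X * derivative A) - A ^ d

/-- Successive polynomial truncations of the solution. -/
noncomputable def W (P : k[X]) (d : ℕ) : ℕ → k[X]
  | 0 => 1
  | n + 1 => W P d n +
      C ((((d + n : ℕ) : k))⁻¹ * (Phi P d (W P d n)).coeff (n + 1)) * X ^ (n + 1)

lemma W_coeff_zero (P : k[X]) (d : ℕ) : ∀ n, (W P d n).coeff 0 = 1
  | 0 => by simp [W]
  | n + 1 => by
    rw [W, coeff_add, W_coeff_zero P d n]
    simp [coeff_C_mul, coeff_X_pow, mul_assoc]

lemma W_coeff_stable (P : k[X]) (d : ℕ) {n m i : ℕ} (hi : i ≤ n) (hnm : n ≤ m) :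
    (W P d m).coeff i = (W P d n).coeff i := by
  induction m, hnm using Nat.le_induction with
  | base => rfl
  | succ m hm ih =>
    rw [W, coeff_add, ih]
    have hne : i ≠ m + 1 := by omega
    simp [coeff_C_mul, coeff_X_pow, hne, mul_assoc]

lemma coeff_add_pow_special (A : k[X]) (hA : A.coeff 0 = 1) (a : k) {m d : ℕ} (hm : 1 ≤ m)
    (hd : 1 ≤ d) : ((A + C a * X ^ m) ^ d).coeff m = (A ^ d).coeff m + d * a := by
  have hA0 : A.eval 0 = 1 := by rw [← coeff_zero_eq_eval_zero]; exact hA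
  rw [add_comm A, add_pow, finset_sum_coeff]
  have hsub : Finset.range 2 ⊆ Finset.range (d + 1) := Finset.range_subset_range.2 (by omega)
  have hvanish : ∀ i ∈ Finset.range (d + 1), i ∉ Finset.range 2 →
      ((C a * X ^ m) ^ i * A ^ (d - i) * (d.choose i : k[X])).coeff m = 0 := by
    intro i _ hi2
    rw [Finset.mem_range] at hi2
    have hre : (C a * X ^ m) ^ i * A ^ (d - i) * (d.choose i : k[X])
        = (C (a ^ i) * A ^ (d - i) * (d.choose i : k[X])) * X ^ (m * i) := by
      rw [mul_pow, ← C_pow, ← pow_mul]; ring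
    rw [hre, coeff_mul_X_pow', if_neg]
    have : m * 2 ≤ m * i := Nat.mul_le_mul_left m (by omega)
    omega
  rw [← Finset.sum_subset hsub hvanish]
  rw [Finset.sum_range_succ, Finset.sum_range_one]
  have ht0 : ((C a * X ^ m) ^ 0 * A ^ (d - 0) * (d.choose 0 : k[X])).coeff m
      = (A ^ d).coeff m := by simp
  have ht1 : ((C a * X ^ m) ^ 1 * A ^ (d - 1) * (d.choose 1 : k[X])).coeff m = d * a := by
    rw [Nat.choose_one_right, pow_one]
    have hre : C a * X ^ m * A ^ (d - 1) * (d : k[X])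
        = (C a * A ^ (d - 1) * (d : k[X])) * X ^ m := by ring
    rw [hre]
    have := coeff_mul_X_pow (C a * A ^ (d - 1) * (d : k[X])) m 0
    rw [zero_add] at this
    rw [this, coeff_zero_eq_eval_zero]
    simp [hA0]
    ring
  rw [ht0, ht1]

lemma Phi_W_coeff (P : k[X]) (hP : P.coeff 0 = 1) (d : ℕ) (hd : 1 ≤ d) (n : ℕ) :
    (Phi P d (W P d n)).coeff n = 0 := by
  cases n with
  | zero =>
    simp [Phi, W, hP, hd]
  | succ n =>
    set A := W P d n with hA
    set a := (((d + n : ℕ) : k))⁻¹ * (Phi P d A).coeff (n + 1) with ha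
    have hW : W P d (n + 1) = A + C a * X ^ (n + 1) := by rw [W]
    have hA0 : A.coeff 0 = 1 := W_coeff_zero P d n
    -- derivative computation
    have hder : W P d (n + 1) - X * derivative (W P d (n + 1))
        = (A - X * derivative A) + C (a * (1 - ((n : k) + 1))) * X ^ (n + 1) := by
      rw [hW, derivative_add, derivative_C_mul_X_pow]
      have hcast : ((n + 1 : ℕ) : k) = (n : k) + 1 := by push_cast; ring
      rw [hcast]
      have h1 : C (a * ((n : k) + 1)) = C a * C ((n : k) + 1) := by rw [C_mul]
      have h2 : C (a * (1 - ((n : k) + 1))) = C a * (1 - C ((n : k) + 1)) := by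
        rw [C_mul, C_sub, C_1]
      rw [h1, h2]
      have h3 : n + 1 - 1 = n := rfl
      rw [h3]
      ring
    have hmul : (P * (W P d (n + 1) - X * derivative (W P d (n + 1)))).coeff (n + 1)
        = (P * (A - X * derivative A)).coeff (n + 1) + a * (1 - ((n : k) + 1)) := by
      rw [hder, mul_add, coeff_add]
      congr 1
      have hre : P * (C (a * (1 - ((n : k) + 1))) * X ^ (n + 1))
          = (C (a * (1 - ((n : k) + 1))) * P) * X ^ (n + 1) := by ring
      rw [hre]
      have := coeff_mul_X_pow (C (a * (1 - ((n : k) + 1))) * P) (n + 1) 0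
      rw [zero_add] at this
      rw [this, coeff_C_mul, hP, mul_one]
    have hpow : ((W P d (n + 1)) ^ d).coeff (n + 1) = (A ^ d).coeff (n + 1) + d * a := by
      rw [hW]
      exact coeff_add_pow_special A hA0 a (by omega) hd
    have expand : (Phi P d (W P d (n + 1))).coeff (n + 1)
        = (Phi P d A).coeff (n + 1) + (a * (1 - ((n : k) + 1)) - d * a) := by
      rw [Phi, Phi, coeff_sub, coeff_sub, hmul, hpow]
      ring
    have hne : (((d + n : ℕ) : k)) ≠ 0 := Nat.cast_ne_zero.2 (by omega)
    have hne' : ((d : k) + (n : k)) ≠ 0 := by push_cast at hne; exact hne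
    have hval : a * ((d : k) + (n : k)) = (Phi P d A).coeff (n + 1) := by
      rw [ha]
      push_cast
      field_simp
    rw [expand, ← hval]
    ring

/-- The solution power series. -/
noncomputable def wps (P : k[X]) (d : ℕ) : PowerSeries k :=
  PowerSeries.mk fun n => (W P d n).coeff n

/-- `w - X·w'`, built coefficientwise. -/
noncomputable def wD (P : k[X]) (d : ℕ) : PowerSeries k :=
  PowerSeries.mk fun n => (1 - (n : k)) * (W P d n).coeff n

lemma wps_agree (P : k[X]) (d n : ℕ) : ∀ i ≤ n,
    PowerSeries.coeff i (wps P d) =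
      PowerSeries.coeff i ((W P d n : k[X]) : PowerSeries k) := by
  intro i hi
  rw [wps, PowerSeries.coeff_mk, Polynomial.coeff_coe]
  exact (W_coeff_stable P d le_rfl hi).symm

lemma wD_agree (P : k[X]) (d n : ℕ) : ∀ i ≤ n,
    PowerSeries.coeff i (wD P d) =
      PowerSeries.coeff i ((W P d n - X * derivative (W P d n) : k[X]) : PowerSeries k) := by
  intro i hi
  rw [wD, PowerSeries.coeff_mk, Polynomial.coeff_coe, coeff_sub]
  have hst : (W P d n).coeff i = (W P d i).coeff i := W_coeff_stable P d le_rfl hi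
  cases i with
  | zero => simp [hst.symm]
  | succ i =>
    rw [coeff_X_mul, coeff_derivative, hst]
    push_cast
    ring

lemma main_ps (P : k[X]) (hP : P.coeff 0 = 1) (d : ℕ) (hd : 1 ≤ d) :
    (wps P d) ^ d = (P : PowerSeries k) * wD P d := by
  ext n
  have h1 := ps_coeff_pow_congr (wps_agree P d n) d n le_rfl
  have h2 := ps_coeff_mul_congr
    (fun i _ => rfl : ∀ i ≤ n,
      PowerSeries.coeff i (P : PowerSeries k) = PowerSeries.coeff i (P : PowerSeries k))
    (wD_agree P d n)
  rw [h1, h2, ← Polynomial.coe_pow, ← Polynomial.coe_mul, Polynomial.coeff_coe,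
    Polynomial.coeff_coe]
  have h3 := Phi_W_coeff P hP d hd n
  rw [Phi, coeff_sub, sub_eq_zero] at h3
  exact h3.symm

end Stmt6Aux

open Stmt6Aux in
/-- For monic `g` of degree `d ≥ 1`, there is `s ∈ k((t⁻¹))` of the form
`s = t + (terms of degree ≤ 0)` with `s^d = g(t)·s'`, i.e. `g∂ = s^d ∂_s`. -/
theorem stmt6 (k : Type*) [Field k] [CharZero k] (g : k[X])
    (hg : g.Monic) (hd : 1 ≤ g.natDegree) :
    ∃ s : LaurentSeries k,
      s.coeff (-1) = 1 ∧ (∀ n : ℤ, n < -1 → s.coeff n = 0) ∧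
      s ^ g.natDegree = Polynomial.aeval (tVar k) g * tDeriv s := by
  classical
  set d := g.natDegree with hdef
  set Prev : k[X] := ∑ i ∈ Finset.range (d + 1), C (g.coeff (d - i)) * X ^ i with hPrevdef
  have hPc : ∀ j : ℕ, Prev.coeff j = if j ≤ d then g.coeff (d - j) else 0 := by
    intro j
    rw [hPrevdef, finset_sum_coeff]
    have hterm : ∀ i ∈ Finset.range (d + 1),
        (C (g.coeff (d - i)) * X ^ i).coeff j = if j = i then g.coeff (d - i) else 0 := by
      intro i _
      rw [coeff_C_mul, coeff_X_pow, mul_ite, mul_one, mul_zero]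
    rw [Finset.sum_congr rfl hterm, Finset.sum_ite_eq]
    simp [Finset.mem_range, Nat.lt_succ_iff]
  have hP0 : Prev.coeff 0 = 1 := by
    rw [hPc 0, if_pos (Nat.zero_le d)]
    exact hg.coeff_natDegree
  set w : PowerSeries k := wps Prev d with hwdef
  set s : LaurentSeries k := HahnSeries.single (-1 : ℤ) 1 * HahnSeries.ofPowerSeries ℤ k w
    with hsdef
  have hscoeff : ∀ n : ℤ, s.coeff n = (HahnSeries.ofPowerSeries ℤ k w).coeff (n + 1) := by
    intro n
    rw [hsdef]
    have h : n = (n + 1) + (-1) := by ring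
    conv_lhs => rw [h, HahnSeries.coeff_single_mul_add, one_mul]
  refine ⟨s, ?_, ?_, ?_⟩
  · rw [hscoeff (-1)]
    have : ((-1 : ℤ) + 1) = ((0 : ℕ) : ℤ) := by norm_num
    rw [this, HahnSeries.ofPowerSeries_apply_coeff]
    rw [hwdef, wps, PowerSeries.coeff_mk]
    simp [W]
  · intro n hn
    rw [hscoeff n]
    exact ofPowerSeries_coeff_neg _ (by omega)
  · -- main equation
    have hts : tDeriv s = HahnSeries.ofPowerSeries ℤ k (wD Prev d) := by
      ext n
      rw [tDeriv_coeff]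
      have hs1 : s.coeff (n - 1) = (HahnSeries.ofPowerSeries ℤ k w).coeff n := by
        rw [hscoeff (n - 1)]
        norm_num
      rw [hs1]
      rcases le_or_gt 0 n with hn | hn
      · obtain ⟨m, rfl⟩ := Int.eq_ofNat_of_zero_le hn
        rw [HahnSeries.ofPowerSeries_apply_coeff, HahnSeries.ofPowerSeries_apply_coeff]
        rw [hwdef, wps, wD, PowerSeries.coeff_mk, PowerSeries.coeff_mk]
        push_cast
        ring
      · rw [ofPowerSeries_coeff_neg _ hn, ofPowerSeries_coeff_neg _ hn, mul_zero, neg_zero]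
    have hC : Polynomial.aeval (tVar k) g
        = HahnSeries.single (-(d : ℤ)) 1 * HahnSeries.ofPowerSeries ℤ k (Prev : PowerSeries k) := by
      rw [Polynomial.aeval_eq_sum_range, ← hdef]
      simp only [Algebra.smul_def]
      ext n
      have hsum : (∑ i ∈ Finset.range (d + 1),
            algebraMap k (LaurentSeries k) (g.coeff i) * tVar k ^ i).coeff n
          = ∑ i ∈ Finset.range (d + 1),
            (algebraMap k (LaurentSeries k) (g.coeff i) * tVar k ^ i).coeff n :=
        map_sum (HahnSeries.coeff.addMonoidHom n) _ _
      refine hsum.trans ?_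
      have hterm : ∀ i ∈ Finset.range (d + 1),
          (algebraMap k (LaurentSeries k) (g.coeff i) * tVar k ^ i).coeff n
            = if n = -(i : ℤ) then g.coeff i else 0 := by
        intro i _
        rw [tVar, HahnSeries.single_pow, one_pow]
        have hsm : i • (-1 : ℤ) = -(i : ℤ) := by simp
        have halg : (algebraMap k (LaurentSeries k)) (g.coeff i)
            = HahnSeries.single (0 : ℤ) (g.coeff i) := by
          have h0 : (algebraMap k (LaurentSeries k)) (g.coeff i)
              = HahnSeries.ofPowerSeries ℤ k (PowerSeries.C (g.coeff i)) := rfl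
          rw [h0, HahnSeries.ofPowerSeries_C, HahnSeries.C_apply]
        rw [hsm, halg, HahnSeries.single_mul_single, zero_add, mul_one,
          HahnSeries.coeff_single]
        split <;> rfl
      rw [Finset.sum_congr rfl hterm]
      have hrhs : (HahnSeries.single (-(d : ℤ)) 1
          * HahnSeries.ofPowerSeries ℤ k (Prev : PowerSeries k)).coeff n
          = (HahnSeries.ofPowerSeries ℤ k (Prev : PowerSeries k)).coeff (n + d) := by
        have h : n = (n + d) + (-(d : ℤ)) := by ring
        conv_lhs => rw [h, HahnSeries.coeff_single_mul_add, one_mul]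
      rw [hrhs]
      by_cases hn1 : -(d : ℤ) ≤ n ∧ n ≤ 0
      · obtain ⟨hn1a, hn1b⟩ := hn1
        have hj : (0 : ℤ) ≤ n + d := by omega
        obtain ⟨j, hj'⟩ := Int.eq_ofNat_of_zero_le hj
        have hi0 : ((d - j : ℕ) : ℤ) = -n := by omega
        rw [hj', HahnSeries.ofPowerSeries_apply_coeff, Polynomial.coeff_coe, hPc j]
        rw [if_pos (by omega : j ≤ d)]
        rw [Finset.sum_eq_single_of_mem (d - j) (Finset.mem_range.2 (by omega))]
        · rw [if_pos (by omega)]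
        · intro i hi hne
          rw [Finset.mem_range] at hi
          rw [if_neg (by omega)]
      · rw [Finset.sum_eq_zero]
        · rcases le_or_gt 0 (n + d) with hnd | hnd
          · obtain ⟨j, hj'⟩ := Int.eq_ofNat_of_zero_le hnd
            rw [hj', HahnSeries.ofPowerSeries_apply_coeff, Polynomial.coeff_coe, hPc j,
              if_neg (by omega)]
          · rw [ofPowerSeries_coeff_neg _ hnd]
        · intro i hi
          rw [Finset.mem_range] at hi
          rw [if_neg (by omega)]
    have hpow1 : (HahnSeries.single (-1 : ℤ) (1 : k)) ^ d = HahnSeries.single (-(d : ℤ)) 1 := by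
      rw [HahnSeries.single_pow, one_pow]
      congr 1
      simp
    have hLHS : s ^ d = HahnSeries.single (-(d : ℤ)) 1
        * HahnSeries.ofPowerSeries ℤ k (w ^ d) := by
      rw [hsdef, mul_pow, hpow1, ← map_pow (HahnSeries.ofPowerSeries ℤ k) w d]
    calc s ^ d = HahnSeries.single (-(d : ℤ)) 1 * HahnSeries.ofPowerSeries ℤ k (w ^ d) := hLHS
      _ = HahnSeries.single (-(d : ℤ)) 1
          * HahnSeries.ofPowerSeries ℤ k ((Prev : PowerSeries k) * wD Prev d) := by
          rw [hwdef, main_ps Prev hP0 d hd]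
      _ = Polynomial.aeval (tVar k) g * tDeriv s := by
          rw [map_mul, ← mul_assoc, ← hC, hts]
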